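/- Let α be a regular cardinal, let 𝒜 be a cocomplete abelian category, and let T be an object of 𝒜 admitting an exact sequence P₂ ⟶ P₁ ⟶ P₀ ⟶ T ⟶ 0 in which P₀, P₁ and P₂ are projective and α-presentable. Then the class {Y ∈ 𝒜 : Hom_𝒜(T,Y) = 0 and Ext¹_𝒜(T,Y) = 0} is closed under α-directed colimits: if (Y_i)_{i∈I} is an α-directed system with Hom_𝒜(T,Y_i) = 0 = Ext¹_𝒜(T,Y_i) for all i ∈ I, then Hom_𝒜(T, colim Y_i) = 0 = Ext¹_𝒜(T, colim Y_i). -/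

import Mathlib

open CategoryTheory CategoryTheory.Limits Opposite

universe v u

/-- A preorder `I` is `α`-directed when every subset of cardinality `< α` has an upper bound. -/
def IsCardinalDirected (α : Cardinal.{v}) (I : Type v) [Preorder I] : Prop :=
  ∀ S : Set I, Cardinal.mk S < α → ∃ b : I, ∀ s ∈ S, s ≤ b

/-- An object `X` is `α`-presentable when, for every `α`-directed system `Y` admitting a
colimit, the canonical comparison map
`colim Hom(X, Y i) ⟶ Hom(X, colim Y)` is an isomorphism. -/
def IsAlphaPresentable (α : Cardinal.{v}) {C : Type u} [Category.{v} C] (X : C) : Prop :=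
  ∀ (I : Type v) [Preorder I], IsCardinalDirected α I →
    ∀ (Y : I ⥤ C) [HasColimit Y],
      IsIso (colimit.post Y (coyoneda.obj (op X)))

/-- `Ext¹_𝒜(T, Y) = 0`, expressed by the (equivalent) property that every short exact
sequence `0 ⟶ Y ⟶ E ⟶ T ⟶ 0` splits. -/
def Ext1Vanishes {A : Type u} [Category.{v} A] [Abelian A] (T Y : A) : Prop :=
  ∀ (E : A) (i : Y ⟶ E) (p : E ⟶ T) (w : i ≫ p = 0),
    (ShortComplex.mk i p w).ShortExact → ∃ s : T ⟶ E, s ≫ p = 𝟙 T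

section Helpers


variable {α : Cardinal.{v}}

lemma isFiltered_of_isCardinalDirected {I : Type v} [Preorder I]
    (hα : α.IsRegular) (hI : IsCardinalDirected α I) : IsFiltered I := by
  have hne : Nonempty I := by
    obtain ⟨b, -⟩ := hI ∅ (by
      rw [Cardinal.mk_emptyCollection]
      exact Cardinal.aleph0_pos.trans_le hα.aleph0_le)
    exact ⟨b⟩
  have hdir : IsDirected I (· ≤ ·) := ⟨fun a b => by
    obtain ⟨c, hc⟩ := hI {a, b}
      (((Set.finite_singleton b).insert a).lt_aleph0.trans_le hα.aleph0_le)
    exact ⟨c, hc a (by simp), hc b (by simp)⟩⟩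
  infer_instance

lemma IsAlphaPresentable.exists_factor {A : Type u} [Category.{v} A]
    {X : A} (hX : IsAlphaPresentable α X) {I : Type v} [Preorder I]
    (hI : IsCardinalDirected α I) (Y : I ⥤ A) [HasColimit Y] (f : X ⟶ colimit Y) :
    ∃ (i : I) (g : X ⟶ Y.obj i), g ≫ colimit.ι Y i = f := by
  have := hX I hI Y
  have hb := (isIso_iff_bijective (colimit.post Y (coyoneda.obj (op X)))).mp this
  obtain ⟨x, hx⟩ := hb.2 f
  obtain ⟨i, g, hg⟩ := Types.jointly_surjective' x
  refine ⟨i, g, ?_⟩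
  have h := ConcreteCategory.congr_hom (colimit.ι_post Y (coyoneda.obj (op X)) i) g
  simp only [types_comp_apply] at h
  rw [hg] at h
  rw [hx] at h
  exact h.symm

lemma IsAlphaPresentable.eq_eventually {A : Type u} [Category.{v} A]
    {X : A} (hX : IsAlphaPresentable α X) (hα : α.IsRegular) {I : Type v} [Preorder I]
    (hI : IsCardinalDirected α I) (Y : I ⥤ A) [HasColimit Y] (i : I) (g g' : X ⟶ Y.obj i)
    (h : g ≫ colimit.ι Y i = g' ≫ colimit.ι Y i) :
    ∃ (j : I) (hij : i ≤ j),
      g ≫ Y.map (homOfLE hij) = g' ≫ Y.map (homOfLE hij) := by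
  have : IsFiltered I := isFiltered_of_isCardinalDirected hα hI
  have hb := (isIso_iff_bijective (colimit.post Y (coyoneda.obj (op X)))).mp (hX I hI Y)
  have heq : colimit.ι (Y ⋙ coyoneda.obj (op X)) i g
      = colimit.ι (Y ⋙ coyoneda.obj (op X)) i g' := by
    apply hb.1
    have h1 := ConcreteCategory.congr_hom (colimit.ι_post Y (coyoneda.obj (op X)) i) g
    have h2 := ConcreteCategory.congr_hom (colimit.ι_post Y (coyoneda.obj (op X)) i) g'
    simp only [types_comp_apply] at h1 h2
    rw [h1, h2]
    simpa using h
  rw [Types.FilteredColimit.colimit_eq_iff] at heq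
  obtain ⟨k, f, f', hk⟩ := heq
  rw [Subsingleton.elim f' f] at hk
  refine ⟨k, leOfHom f, ?_⟩
  have : Y.map (homOfLE (leOfHom f)) = Y.map f := congrArg Y.map (Subsingleton.elim _ _)
  rw [this]
  simpa using hk

end Helpers

/-- let `α` be a regular cardinal, `𝒜` a cocomplete abelian category, and
`T` an object with an exact sequence `P₂ ⟶ P₁ ⟶ P₀ ⟶ T ⟶ 0` where `P₀, P₁, P₂` are
projective and `α`-presentable.  Then the class
`{Y | Hom(T, Y) = 0 and Ext¹(T, Y) = 0}` is closed under `α`-directed colimits. -/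
theorem perp01_closed_under_cardinalDirected_colimits
    {A : Type u} [Category.{v} A] [Abelian A] [HasColimits A]
    (α : Cardinal.{v}) (hα : α.IsRegular)
    (T P₀ P₁ P₂ : A) (g₂ : P₂ ⟶ P₁) (g₁ : P₁ ⟶ P₀) (p : P₀ ⟶ T)
    [Projective P₀] [Projective P₁] [Projective P₂]
    (h₀ : IsAlphaPresentable α P₀) (h₁ : IsAlphaPresentable α P₁)
    (h₂ : IsAlphaPresentable α P₂)
    (hepi : Epi p)
    (w₁ : g₁ ≫ p = 0) (w₂ : g₂ ≫ g₁ = 0)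
    (hex₁ : (ShortComplex.mk g₁ p w₁).Exact) (hex₂ : (ShortComplex.mk g₂ g₁ w₂).Exact)
    (I : Type v) [Preorder I] (hI : IsCardinalDirected α I) (Y : I ⥤ A)
    (hvan : ∀ i : I, (∀ h : T ⟶ Y.obj i, h = 0) ∧ Ext1Vanishes T (Y.obj i)) :
    (∀ h : T ⟶ colimit Y, h = 0) ∧ Ext1Vanishes T (colimit Y) := by
  have hfil : IsFiltered I := isFiltered_of_isCardinalDirected hα hI
  haveI : Epi (ShortComplex.mk g₁ p w₁).g := hepi
  -- Part 1 : Hom(T, colim Y) = 0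
  have part1 : ∀ h : T ⟶ colimit Y, h = 0 := by
    intro h
    obtain ⟨i, f, hf⟩ := h₀.exists_factor hI Y (p ≫ h)
    have h0 : (g₁ ≫ f) ≫ colimit.ι Y i = (0 : P₁ ⟶ Y.obj i) ≫ colimit.ι Y i := by
      rw [Category.assoc, hf, ← Category.assoc, w₁, zero_comp, zero_comp]
    obtain ⟨j, hij, hj⟩ := h₁.eq_eventually hα hI Y i (g₁ ≫ f) 0 h0
    rw [zero_comp] at hj
    have hg₁f' : g₁ ≫ (f ≫ Y.map (homOfLE hij)) = 0 := by
      rw [← Category.assoc]; exact hj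
    obtain ⟨h', hh'raw⟩ := hex₁.desc' (f ≫ Y.map (homOfLE hij)) hg₁f'
    have hh' : p ≫ h' = f ≫ Y.map (homOfLE hij) := hh'raw
    have hf'0 : f ≫ Y.map (homOfLE hij) = 0 := by
      rw [← hh', (hvan j).1 h', comp_zero]
    have hph : p ≫ h = 0 := by
      rw [← hf, ← colimit.w Y (homOfLE hij), ← Category.assoc, hf'0, zero_comp]
    rw [← cancel_epi p, hph, comp_zero]
  refine ⟨part1, ?_⟩
  -- Part 2 : Ext¹(T, colim Y) = 0
  intro E e q wq hse
  haveI : Mono (ShortComplex.mk e q wq).f := hse.mono_f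
  haveI : Epi (ShortComplex.mk e q wq).g := hse.epi_g
  haveI hq : Epi q := hse.epi_g
  set a : P₀ ⟶ E := Projective.factorThru p q with hadef
  have ha : a ≫ q = p := Projective.factorThru_comp p q
  have hb0 : (g₁ ≫ a) ≫ q = 0 := by
    rw [Category.assoc, ha, w₁]
  obtain ⟨b, hbraw⟩ := hse.exact.lift' (g₁ ≫ a) hb0
  have hb : b ≫ e = g₁ ≫ a := hbraw
  have hg₂b : g₂ ≫ b = 0 := by
    rw [← cancel_mono e, Category.assoc, hb, ← Category.assoc, w₂, zero_comp, zero_comp]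
  obtain ⟨i, b', hb'⟩ := h₁.exists_factor hI Y b
  have h0 : (g₂ ≫ b') ≫ colimit.ι Y i = (0 : P₂ ⟶ Y.obj i) ≫ colimit.ι Y i := by
    rw [Category.assoc, hb', zero_comp, hg₂b]
  obtain ⟨j, hij, hj⟩ := h₂.eq_eventually hα hI Y i (g₂ ≫ b') 0 h0
  rw [zero_comp] at hj
  set b'' : P₁ ⟶ Y.obj j := b' ≫ Y.map (homOfLE hij) with hb''def
  have hg₂b'' : g₂ ≫ b'' = 0 := by rw [hb''def, ← Category.assoc]; exact hj
  -- the kernel K of p with its epi from P₁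
  set K := (ShortComplex.mk g₁ p w₁).cycles with hK
  set ι : K ⟶ P₀ := (ShortComplex.mk g₁ p w₁).iCycles with hιdef
  set π : P₁ ⟶ K := (ShortComplex.mk g₁ p w₁).toCycles with hπdef
  have hπι : π ≫ ι = g₁ := (ShortComplex.mk g₁ p w₁).toCycles_i
  have hιp : ι ≫ p = 0 := (ShortComplex.mk g₁ p w₁).iCycles_g
  haveI hπepi : Epi π := hex₁.epi_toCycles
  haveI hιmono : Mono ι := by
    rw [hιdef]; infer_instance
  have wπ : g₂ ≫ π = 0 := by
    rw [← cancel_mono ι, Category.assoc, hπι, w₂, zero_comp]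
  have hexπ : (ShortComplex.mk g₂ π wπ).Exact := by
    rw [ShortComplex.exact_iff_exact_up_to_refinements]
    intro Z x hx
    refine hex₂.exact_up_to_refinements x ?_
    show x ≫ g₁ = 0
    rw [← hπι, ← Category.assoc]
    have hx' : x ≫ π = 0 := hx
    rw [hx', zero_comp]
  haveI : Epi (ShortComplex.mk g₂ π wπ).g := hπepi
  obtain ⟨u, huraw⟩ := hexπ.desc' b'' hg₂b''
  have hu : π ≫ u = b'' := huraw
  have hexι : (ShortComplex.mk ι p hιp).Exact :=
    ShortComplex.exact_of_f_is_kernel _ (ShortComplex.mk g₁ p w₁).cyclesIsKernel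
  -- the pushout of ι along u, built as a cokernel
  set φ : K ⟶ P₀ ⊞ Y.obj j := ι ≫ biprod.inl - u ≫ biprod.inr with hφdef
  have hφr : φ ≫ biprod.desc p (0 : Y.obj j ⟶ T) = 0 := by
    rw [hφdef, Preadditive.sub_comp, Category.assoc, Category.assoc,
      biprod.inl_desc, biprod.inr_desc, hιp, comp_zero, sub_zero]
  set E' := cokernel φ with hE'def
  set inl : P₀ ⟶ E' := biprod.inl ≫ cokernel.π φ with hinldef
  set inr : Y.obj j ⟶ E' := biprod.inr ≫ cokernel.π φ with hinrdef
  set q' : E' ⟶ T := cokernel.desc φ (biprod.desc p 0) hφr with hq'def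
  have hinlq' : inl ≫ q' = p := by
    rw [hinldef, hq'def, Category.assoc, cokernel.π_desc, biprod.inl_desc]
  have hinrq' : inr ≫ q' = 0 := by
    rw [hinrdef, hq'def, Category.assoc, cokernel.π_desc, biprod.inr_desc]
  have hsq : ι ≫ inl = u ≫ inr := by
    have hc := cokernel.condition φ
    rw [hφdef, Preadditive.sub_comp, Category.assoc, Category.assoc, sub_eq_zero] at hc
    rw [hinldef, hinrdef, ← Category.assoc, ← Category.assoc] at *
    exact hc
  haveI hmono_inr : Mono inr := by
    rw [Preadditive.mono_iff_cancel_zero]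
    intro Z z hz
    have hexc : (ShortComplex.mk φ (cokernel.π φ) (cokernel.condition φ)).Exact :=
      ShortComplex.exact_of_g_is_cokernel _ (cokernelIsCokernel φ)
    obtain ⟨Z', ρ, hρ, k, hk⟩ := hexc.exact_up_to_refinements (z ≫ biprod.inr) (by
      show (z ≫ biprod.inr) ≫ cokernel.π φ = 0
      rw [Category.assoc, ← hinrdef, hz])
    have hφfst : φ ≫ biprod.fst = ι := by
      rw [hφdef, Preadditive.sub_comp, Category.assoc, Category.assoc, biprod.inl_fst,
        biprod.inr_fst, Category.comp_id, comp_zero, sub_zero]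
    have hkι : k ≫ ι = 0 := by
      have h2 := hk =≫ biprod.fst
      simp only [Category.assoc, biprod.inr_fst, comp_zero] at h2
      rw [hφfst] at h2
      exact h2.symm
    have hk0 : k = 0 := by rw [← cancel_mono ι, hkι, zero_comp]
    rw [hk0, zero_comp] at hk
    have hz0 : ρ ≫ z = 0 := by
      have h3 := hk =≫ biprod.snd
      simpa using h3
    rw [← cancel_epi ρ, hz0, comp_zero]
  haveI hepiq' : Epi q' := by
    haveI h1 : Epi (inl ≫ q') := by rw [hinlq']; exact hepi
    exact epi_of_epi inl q'
  have hexE' : (ShortComplex.mk inr q' hinrq').Exact := by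
    rw [ShortComplex.exact_iff_exact_up_to_refinements]
    intro Z z hz
    have hz' : z ≫ q' = 0 := hz
    obtain ⟨Z₁, ρ₁, hρ₁, ww, hw⟩ := surjective_up_to_refinements_of_epi (cokernel.π φ) z
    have hdesc : biprod.desc p (0 : Y.obj j ⟶ T) = biprod.fst ≫ p := by
      apply biprod.hom_ext' <;> simp
    have hwp : (ww ≫ biprod.fst) ≫ p = 0 := by
      have h2 := hw =≫ q'
      rw [Category.assoc, Category.assoc, hz', comp_zero, hq'def, cokernel.π_desc,
        hdesc] at h2
      rw [Category.assoc]
      exact h2.symm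
    obtain ⟨Z₂, ρ₂, hρ₂, k, hk⟩ := hexι.exact_up_to_refinements (ww ≫ biprod.fst) hwp
    have hk' : ρ₂ ≫ ww ≫ biprod.fst = k ≫ ι := hk
    refine ⟨Z₂, ρ₂ ≫ ρ₁, epi_comp _ _, ρ₂ ≫ ww ≫ biprod.snd + k ≫ u, ?_⟩
    show (ρ₂ ≫ ρ₁) ≫ z = (ρ₂ ≫ ww ≫ biprod.snd + k ≫ u) ≫ inr
    have e2 : ww ≫ cokernel.π φ =
        (ww ≫ biprod.fst) ≫ (biprod.inl ≫ cokernel.π φ)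
          + (ww ≫ biprod.snd) ≫ (biprod.inr ≫ cokernel.π φ) := by
      calc ww ≫ cokernel.π φ
          = (ww ≫ (biprod.fst ≫ biprod.inl + biprod.snd ≫ biprod.inr)) ≫ cokernel.π φ := by
            rw [biprod.total, Category.comp_id]
        _ = _ := by
            simp only [Preadditive.comp_add, Preadditive.add_comp, Category.assoc]
    calc (ρ₂ ≫ ρ₁) ≫ z = ρ₂ ≫ ww ≫ cokernel.π φ := by
          rw [Category.assoc, hw]
      _ = ρ₂ ≫ ((ww ≫ biprod.fst) ≫ (biprod.inl ≫ cokernel.π φ)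
            + (ww ≫ biprod.snd) ≫ (biprod.inr ≫ cokernel.π φ)) := by rw [e2]
      _ = (ρ₂ ≫ ww ≫ biprod.fst) ≫ inl + (ρ₂ ≫ ww ≫ biprod.snd) ≫ inr := by
          rw [Preadditive.comp_add, hinldef, hinrdef]
          simp only [Category.assoc]
      _ = (k ≫ ι) ≫ inl + (ρ₂ ≫ ww ≫ biprod.snd) ≫ inr := by rw [hk']
      _ = (ρ₂ ≫ ww ≫ biprod.snd + k ≫ u) ≫ inr := by
          rw [Category.assoc, hsq, Preadditive.add_comp, ← Category.assoc k u inr]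
          abel
  have hseE' : (ShortComplex.mk inr q' hinrq').ShortExact :=
    ShortComplex.ShortExact.mk' hexE' hmono_inr hepiq'
  obtain ⟨s', hs'⟩ := (hvan j).2 E' inr q' hinrq' hseE'
  have hδ : (inl - p ≫ s') ≫ q' = 0 := by
    rw [Preadditive.sub_comp, hinlq', Category.assoc, hs', Category.comp_id, sub_self]
  haveI : Mono (ShortComplex.mk inr q' hinrq').f := hmono_inr
  obtain ⟨c₀, hc₀raw⟩ := hseE'.exact.lift' (inl - p ≫ s') hδ
  have hc₀ : c₀ ≫ inr = inl - p ≫ s' := hc₀raw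
  have hιc₀ : ι ≫ c₀ = u := by
    rw [← cancel_mono inr, Category.assoc, hc₀, Preadditive.comp_sub, hsq,
      ← Category.assoc ι p s', hιp, zero_comp, sub_zero]
  have hg₁c₀ : g₁ ≫ c₀ = b'' := by
    rw [← hπι, Category.assoc, hιc₀, hu]
  have hg₁cbar : g₁ ≫ (c₀ ≫ colimit.ι Y j) = b := by
    rw [← Category.assoc, hg₁c₀, hb''def, Category.assoc, colimit.w Y (homOfLE hij), hb']
  have hfinal : g₁ ≫ (a - (c₀ ≫ colimit.ι Y j) ≫ e) = 0 := by
    rw [Preadditive.comp_sub, ← Category.assoc g₁, hg₁cbar, hb, sub_self]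
  obtain ⟨s, hsraw⟩ := hex₁.desc' (a - (c₀ ≫ colimit.ι Y j) ≫ e) hfinal
  have hs : p ≫ s = a - (c₀ ≫ colimit.ι Y j) ≫ e := hsraw
  refine ⟨s, ?_⟩
  rw [← cancel_epi p, ← Category.assoc, hs, Preadditive.sub_comp, ha, Category.assoc,
    wq, comp_zero, sub_zero, Category.comp_id]
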